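/- Let μ₁,₁ⁿ (n > 3) be the complex algebra with basis e₁,…,eₙ and only nonzero products eᵢeⱼ = e_{i+j} for 2 ≤ i+j ≤ n−1. A linear map D on μ₁,₁ⁿ is a derivation if and only if there exist scalars α₁,…,αₙ, β_{n−1}, βₙ such that D(e₁) = ∑_{i=1}^{n} αᵢeᵢ, D(eᵢ) = i·∑_{k=i}^{n−1} α_{k−i+1}e_k for 2 ≤ i ≤ n−1, and D(eₙ) = β_{n−1}e_{n−1} + βₙeₙ. In particular dim Der(μ₁,₁ⁿ) = n + 2. -/

import Mathlib

/-- basis vectors -/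
noncomputable def e (n : ℕ) (i : Fin n) : Fin n → ℂ := Pi.single i 1

/-- product of the null-filiform algebra μ₀ⁿ (0-based indices: index a ↔ e_{a+1}) -/
noncomputable def mul0 (n : ℕ) (x y : Fin n → ℂ) : Fin n → ℂ :=
  fun k => ∑ i : Fin n, ∑ j : Fin n,
    if (i : ℕ) + (j : ℕ) + 1 = (k : ℕ) then x i * y j else 0

def IsDer {n : ℕ} (μ : (Fin n → ℂ) → (Fin n → ℂ) → Fin n → ℂ)
    (D : (Fin n → ℂ) →ₗ[ℂ] (Fin n → ℂ)) : Prop :=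
  ∀ x y, D (μ x y) = μ (D x) y + μ x (D y)

def IsLocDer {n : ℕ} (μ : (Fin n → ℂ) → (Fin n → ℂ) → Fin n → ℂ)
    (Δ : (Fin n → ℂ) →ₗ[ℂ] (Fin n → ℂ)) : Prop :=
  ∀ x, ∃ D, IsDer μ D ∧ Δ x = D x

/-- the submodule of derivations, given bilinearity of μ -/
noncomputable def derSubmodule (n : ℕ) (μ : (Fin n → ℂ) → (Fin n → ℂ) → Fin n → ℂ)
    (hal : ∀ x y z, μ (x + y) z = μ x z + μ y z)
    (har : ∀ x y z, μ x (y + z) = μ x y + μ x z)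
    (hsl : ∀ (c : ℂ) x y, μ (c • x) y = c • μ x y)
    (hsr : ∀ (c : ℂ) x y, μ x (c • y) = c • μ x y) :
    Submodule ℂ ((Fin n → ℂ) →ₗ[ℂ] (Fin n → ℂ)) where
  carrier := {D | IsDer μ D}
  zero_mem' := by
    intro x y
    have h1 : μ 0 y = 0 := by simpa using hsl 0 0 y
    have h2 : μ x 0 = 0 := by simpa using hsr 0 x 0
    simp [h1, h2]
  add_mem' := by
    intro D1 D2 h1 h2 x y
    simp only [LinearMap.add_apply, h1 x y, h2 x y, hal, har]
    abel
  smul_mem' := by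
    intro c D hD x y
    simp only [LinearMap.smul_apply, hD x y, smul_add, hsl, hsr]

/-- the submodule of local derivations, given bilinearity of μ -/
noncomputable def locDerSubmodule (n : ℕ) (μ : (Fin n → ℂ) → (Fin n → ℂ) → Fin n → ℂ)
    (hal : ∀ x y z, μ (x + y) z = μ x z + μ y z)
    (har : ∀ x y z, μ x (y + z) = μ x y + μ x z)
    (hsl : ∀ (c : ℂ) x y, μ (c • x) y = c • μ x y)
    (hsr : ∀ (c : ℂ) x y, μ x (c • y) = c • μ x y) :
    Submodule ℂ ((Fin n → ℂ) →ₗ[ℂ] (Fin n → ℂ)) where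
  carrier := {Δ | IsLocDer μ Δ}
  zero_mem' := by
    intro x
    exact ⟨0, (derSubmodule n μ hal har hsl hsr).zero_mem, rfl⟩
  add_mem' := by
    intro D1 D2 h1 h2 x
    obtain ⟨E1, hE1, he1⟩ := h1 x
    obtain ⟨E2, hE2, he2⟩ := h2 x
    exact ⟨E1 + E2, (derSubmodule n μ hal har hsl hsr).add_mem hE1 hE2, by
      simp [he1, he2]⟩
  smul_mem' := by
    intro c Δ hΔ x
    obtain ⟨E, hE, he⟩ := hΔ x
    exact ⟨c • E, (derSubmodule n μ hal har hsl hsr).smul_mem c hE, by simp [he]⟩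

lemma mul0_add_left (n : ℕ) (x y z : Fin n → ℂ) :
    mul0 n (x + y) z = mul0 n x z + mul0 n y z := by
  funext k
  simp only [mul0, Pi.add_apply]
  rw [← Finset.sum_add_distrib]
  refine Finset.sum_congr rfl fun i _ => ?_
  rw [← Finset.sum_add_distrib]
  refine Finset.sum_congr rfl fun j _ => ?_
  split <;> ring

lemma mul0_add_right (n : ℕ) (x y z : Fin n → ℂ) :
    mul0 n x (y + z) = mul0 n x y + mul0 n x z := by
  funext k
  simp only [mul0, Pi.add_apply]
  rw [← Finset.sum_add_distrib]
  refine Finset.sum_congr rfl fun i _ => ?_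
  rw [← Finset.sum_add_distrib]
  refine Finset.sum_congr rfl fun j _ => ?_
  split <;> ring

lemma mul0_smul_left (n : ℕ) (c : ℂ) (x y : Fin n → ℂ) :
    mul0 n (c • x) y = c • mul0 n x y := by
  funext k
  simp only [mul0, Pi.smul_apply, smul_eq_mul, Finset.mul_sum]
  refine Finset.sum_congr rfl fun i _ => ?_
  refine Finset.sum_congr rfl fun j _ => ?_
  split <;> ring

lemma mul0_smul_right (n : ℕ) (c : ℂ) (x y : Fin n → ℂ) :
    mul0 n x (c • y) = c • mul0 n x y := by
  funext k
  simp only [mul0, Pi.smul_apply, smul_eq_mul, Finset.mul_sum]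
  refine Finset.sum_congr rfl fun i _ => ?_
  refine Finset.sum_congr rfl fun j _ => ?_
  split <;> ring


noncomputable def mul11 (n : ℕ) (x y : Fin n → ℂ) : Fin n → ℂ :=
  fun k => ∑ i : Fin n, ∑ j : Fin n,
    if (i : ℕ) + (j : ℕ) + 1 = (k : ℕ) ∧ (k : ℕ) + 2 ≤ n then x i * y j else 0

lemma mul11_add_left (n : ℕ) (x y z : Fin n → ℂ) :
    mul11 n (x + y) z = mul11 n x z + mul11 n y z := by
  funext k
  simp only [mul11, Pi.add_apply]
  rw [← Finset.sum_add_distrib]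
  refine Finset.sum_congr rfl fun i _ => ?_
  rw [← Finset.sum_add_distrib]
  refine Finset.sum_congr rfl fun j _ => ?_
  split <;> ring

lemma mul11_add_right (n : ℕ) (x y z : Fin n → ℂ) :
    mul11 n x (y + z) = mul11 n x y + mul11 n x z := by
  funext k
  simp only [mul11, Pi.add_apply]
  rw [← Finset.sum_add_distrib]
  refine Finset.sum_congr rfl fun i _ => ?_
  rw [← Finset.sum_add_distrib]
  refine Finset.sum_congr rfl fun j _ => ?_
  split <;> ring

lemma mul11_smul_left (n : ℕ) (c : ℂ) (x y : Fin n → ℂ) :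
    mul11 n (c • x) y = c • mul11 n x y := by
  funext k
  simp only [mul11, Pi.smul_apply, smul_eq_mul, Finset.mul_sum]
  refine Finset.sum_congr rfl fun i _ => ?_
  refine Finset.sum_congr rfl fun j _ => ?_
  split <;> ring

lemma mul11_smul_right (n : ℕ) (c : ℂ) (x y : Fin n → ℂ) :
    mul11 n x (c • y) = c • mul11 n x y := by
  funext k
  simp only [mul11, Pi.smul_apply, smul_eq_mul, Finset.mul_sum]
  refine Finset.sum_congr rfl fun i _ => ?_
  refine Finset.sum_congr rfl fun j _ => ?_
  split <;> ring

lemma mul11_apply_e_right (n : ℕ) (x : Fin n → ℂ) (b k : Fin n) :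
    mul11 n x (e n b) k =
      if h : (b : ℕ) + 1 ≤ (k : ℕ) ∧ (k : ℕ) + 2 ≤ n then x ⟨(k : ℕ) - (b : ℕ) - 1, by omega⟩
      else 0 := by
  unfold mul11 e
  have : ∀ i : Fin n, ∑ j : Fin n,
      (if (i : ℕ) + (j : ℕ) + 1 = (k : ℕ) ∧ (k : ℕ) + 2 ≤ n then x i * (Pi.single b 1 : Fin n → ℂ) j else 0)
      = if (i : ℕ) + (b : ℕ) + 1 = (k : ℕ) ∧ (k : ℕ) + 2 ≤ n then x i else 0 := by
    intro i
    rw [Finset.sum_eq_single b]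
    · simp [Pi.single_apply]
    · intro j _ hj
      simp [Pi.single_apply, hj]
    · simp
  simp_rw [this]
  split_ifs with h
  · rw [Finset.sum_eq_single (⟨(k : ℕ) - (b : ℕ) - 1, by omega⟩ : Fin n)]
    · simp; omega
    · intro i _ hi
      rw [if_neg]
      rintro ⟨h1, -⟩
      exact hi (by ext; simp; omega)
    · simp
  · apply Finset.sum_eq_zero
    intro i _
    rw [if_neg]
    rintro ⟨h1, h2⟩
    exact h ⟨by omega, h2⟩

lemma mul11_apply_e_left (n : ℕ) (y : Fin n → ℂ) (a k : Fin n) :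
    mul11 n (e n a) y k =
      if h : (a : ℕ) + 1 ≤ (k : ℕ) ∧ (k : ℕ) + 2 ≤ n then y ⟨(k : ℕ) - (a : ℕ) - 1, by omega⟩
      else 0 := by
  unfold mul11 e
  rw [Finset.sum_eq_single a]
  · split_ifs with h
    · rw [Finset.sum_eq_single (⟨(k : ℕ) - (a : ℕ) - 1, by omega⟩ : Fin n)]
      · simp [Pi.single_apply]; omega
      · intro j _ hj
        rw [if_neg]
        rintro ⟨h1, -⟩
        exact hj (by ext; simp; omega)
      · simp
    · apply Finset.sum_eq_zero
      intro j _
      rw [if_neg]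
      rintro ⟨h1, h2⟩
      exact h ⟨by omega, h2⟩
  · intro i _ hi
    apply Finset.sum_eq_zero
    intro j _
    simp [Pi.single_apply, hi]
  · simp

lemma mul11_e_e (n : ℕ) (hn : 3 < n) (a b : Fin n) :
    mul11 n (e n a) (e n b) =
      if h : (a : ℕ) + (b : ℕ) + 3 ≤ n then e n ⟨(a : ℕ) + (b : ℕ) + 1, by omega⟩ else 0 := by
  funext k
  rw [mul11_apply_e_left]
  unfold e
  split_ifs with h1 h2 h2
  · simp only [Pi.single_apply, Fin.ext_iff]
    split_ifs <;> first | rfl | omega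
  · simp [Pi.single_apply]
    intro hk; exfalso; apply h2; subst hk; simp at h1 ⊢; omega
  · rw [eq_comm, Pi.single_apply, if_neg]
    intro hk; apply h1; subst hk; simp; omega
  · simp

lemma e_eq_basis (n : ℕ) (i : Fin n) : e n i = Pi.basisFun ℂ (Fin n) i := by
  simp [e, Pi.basisFun_apply]

lemma isDer_iff_basis (n : ℕ) (D : (Fin n → ℂ) →ₗ[ℂ] (Fin n → ℂ)) :
    IsDer (mul11 n) D ↔
      ∀ a b, D (mul11 n (e n a) (e n b)) =
        mul11 n (D (e n a)) (e n b) + mul11 n (e n a) (D (e n b)) := by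
  constructor
  · intro h a b; exact h _ _
  · intro h
    intro x y
    let T : (Fin n → ℂ) →ₗ[ℂ] (Fin n → ℂ) →ₗ[ℂ] (Fin n → ℂ) :=
      LinearMap.mk₂ ℂ (fun x y => D (mul11 n x y) - mul11 n (D x) y - mul11 n x (D y))
        (by intro x x' y
            simp only [mul11_add_left, map_add, mul11_add_right]
            abel)
        (by intro c x y
            simp only [mul11_smul_left, map_smul, mul11_smul_right, smul_sub])
        (by intro x y y'
            simp only [mul11_add_right, map_add, mul11_add_left]
            abel)
        (by intro c x y
            simp only [mul11_smul_right, map_smul, mul11_smul_left, smul_sub])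
    have hT0 : T = 0 := by
      apply (Pi.basisFun ℂ (Fin n)).ext
      intro a
      apply (Pi.basisFun ℂ (Fin n)).ext
      intro b
      have hab := h a b
      show D (mul11 n _ _) - mul11 n (D _) _ - mul11 n _ (D _) = _
      rw [← e_eq_basis, ← e_eq_basis, hab]
      simp
    have hxy : T x y = 0 := by rw [hT0]; rfl
    have hfin : D (mul11 n x y) - mul11 n (D x) y - mul11 n x (D y) = 0 := hxy
    rw [sub_sub, sub_eq_zero] at hfin
    exact hfin

def Eqn (n : ℕ) (hn : 3 < n) (D : (Fin n → ℂ) →ₗ[ℂ] (Fin n → ℂ)) (a b k : Fin n) : Prop :=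
  (if h : (a : ℕ) + (b : ℕ) + 3 ≤ n then D (e n ⟨(a : ℕ) + (b : ℕ) + 1, by omega⟩) k else 0)
  = (if h : (b : ℕ) + 1 ≤ (k : ℕ) ∧ (k : ℕ) + 2 ≤ n then
      D (e n a) ⟨(k : ℕ) - (b : ℕ) - 1, by omega⟩ else 0)
  + (if h : (a : ℕ) + 1 ≤ (k : ℕ) ∧ (k : ℕ) + 2 ≤ n then
      D (e n b) ⟨(k : ℕ) - (a : ℕ) - 1, by omega⟩ else 0)

lemma basis_iff_eqn (n : ℕ) (hn : 3 < n) (D : (Fin n → ℂ) →ₗ[ℂ] (Fin n → ℂ)) :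
    (∀ a b, D (mul11 n (e n a) (e n b)) =
        mul11 n (D (e n a)) (e n b) + mul11 n (e n a) (D (e n b))) ↔
      ∀ a b k, Eqn n hn D a b k := by
  have key : ∀ a b k, (D (mul11 n (e n a) (e n b))) k =
      (if h : (a : ℕ) + (b : ℕ) + 3 ≤ n then D (e n ⟨(a : ℕ) + (b : ℕ) + 1, by omega⟩) k
       else 0) := by
    intro a b k
    rw [mul11_e_e n hn]
    split_ifs with h
    · rfl
    · simp
  constructor
  · intro h a b k
    have hthis := congrFun (h a b) k
    rw [key] at hthis
    unfold Eqn
    rw [hthis, Pi.add_apply, mul11_apply_e_right, mul11_apply_e_left]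
  · intro h a b
    funext k
    rw [key, Pi.add_apply, mul11_apply_e_right, mul11_apply_e_left]
    exact h a b k
noncomputable def extα (n : ℕ) (α : Fin n → ℂ) : ℕ → ℂ :=
  fun j => if h : j < n then α ⟨j, h⟩ else 0

lemma extα_eq (n : ℕ) (α : Fin n → ℂ) (j : ℕ) (h : j < n) : extα n α j = α ⟨j, h⟩ :=
  dif_pos h

lemma mid_formula (n : ℕ) (hn : 3 < n) (D : (Fin n → ℂ) →ₗ[ℂ] (Fin n → ℂ))
    (hE : ∀ a b k, Eqn n hn D a b k) :
    ∀ m (hm1 : 1 ≤ m) (hm2 : m ≤ n - 2), ∀ k : Fin n,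
      D (e n ⟨m, by omega⟩) k =
        if h : m ≤ (k : ℕ) ∧ (k : ℕ) ≤ n - 2 then
          ((m + 1 : ℕ) : ℂ) * D (e n ⟨0, by omega⟩) ⟨(k : ℕ) - m, by omega⟩
        else 0 := by
  intro m hm1
  induction m, hm1 using Nat.le_induction with
  | base =>
    intro _ k
    have h00 := hE ⟨0, by omega⟩ ⟨0, by omega⟩ k
    unfold Eqn at h00
    simp only [Fin.val_mk] at h00
    rw [dif_pos (by omega)] at h00
    rw [show (⟨0+0+1, by omega⟩ : Fin n) = ⟨1, by omega⟩ from rfl] at h00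
    rw [h00]
    split_ifs with p q q <;> try omega
    · rw [show (⟨(k:ℕ)-0-1, by omega⟩ : Fin n) = ⟨(k:ℕ)-1, by omega⟩ from rfl]
      push_cast
      ring
    · norm_num
  | succ m hm ih =>
    intro hm2 k
    have hstep := hE ⟨m, by omega⟩ ⟨0, by omega⟩ k
    unfold Eqn at hstep
    simp only [Fin.val_mk] at hstep
    rw [dif_pos (by omega)] at hstep
    rw [show (⟨m+0+1, by omega⟩ : Fin n) = ⟨m+1, by omega⟩ from rfl] at hstep
    rw [hstep]
    have ihh := ih (by omega)
    split_ifs with p q r q <;> try omega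
    · rw [show (⟨(k:ℕ)-0-1, by omega⟩ : Fin n) = ⟨(k:ℕ)-1, by omega⟩ from rfl]
      rw [ihh ⟨(k:ℕ)-1, by omega⟩]
      rw [dif_pos (by simp only [Fin.val_mk]; omega)]
      simp only [Fin.val_mk]
      rw [show (⟨(k:ℕ)-1-m, by omega⟩ : Fin n) = ⟨(k:ℕ)-(m+1), by omega⟩ from
        (by ext; simp only [Fin.val_mk]; omega)]
      rw [show (⟨(k:ℕ)-m-1, by omega⟩ : Fin n) = ⟨(k:ℕ)-(m+1), by omega⟩ from
        (by ext; simp only [Fin.val_mk]; omega)]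
      push_cast
      ring
    · rw [show (⟨(k:ℕ)-0-1, by omega⟩ : Fin n) = ⟨(k:ℕ)-1, by omega⟩ from rfl]
      rw [ihh ⟨(k:ℕ)-1, by omega⟩]
      rw [dif_neg (by simp only [Fin.val_mk]; omega)]
      ring
    · ring

lemma last_zero (n : ℕ) (hn : 3 < n) (D : (Fin n → ℂ) →ₗ[ℂ] (Fin n → ℂ))
    (hE : ∀ a b k, Eqn n hn D a b k) :
    ∀ j : Fin n, (j : ℕ) + 3 ≤ n → D (e n ⟨n - 1, (by omega : n - 1 + 1 ≤ n)⟩) j = 0 := by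
  intro j hj
  have h := hE ⟨n - 1, by omega⟩ ⟨0, by omega⟩ ⟨(j : ℕ) + 1, by omega⟩
  unfold Eqn at h
  simp only [Fin.val_mk] at h
  rw [dif_neg (by omega), dif_pos (by omega), dif_neg (by omega), add_zero] at h
  rw [show (⟨(j:ℕ)+1-0-1, by omega⟩ : Fin n) = j from by apply Fin.ext; simp only [Fin.val_mk]; omega] at h
  exact h.symm

lemma backward (n : ℕ) (hn : 3 < n) (D : (Fin n → ℂ) →ₗ[ℂ] (Fin n → ℂ))
    (α : Fin n → ℂ) (β1 β2 : ℂ)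
    (h0 : ∀ k : Fin n, D (e n ⟨0, (by omega : 0 + 1 ≤ n)⟩) k = α k)
    (h1 : ∀ a k : Fin n, 1 ≤ (a : ℕ) → (a : ℕ) ≤ n - 2 →
            D (e n a) k =
              if h : (a : ℕ) ≤ (k : ℕ) ∧ (k : ℕ) ≤ n - 2 then
                (((a : ℕ) + 1 : ℕ) : ℂ) *
                  α ⟨(k : ℕ) - (a : ℕ), lt_of_le_of_lt (Nat.sub_le _ _) k.isLt⟩
              else 0)
    (h2 : D (e n ⟨n - 1, (by omega : n - 1 + 1 ≤ n)⟩) =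
            β1 • e n ⟨n - 2, (by omega : n - 2 + 1 ≤ n)⟩ + β2 • e n ⟨n - 1, (by omega : n - 1 + 1 ≤ n)⟩) :
    ∀ a b k, Eqn n hn D a b k := by
  have hval1 : ∀ a : Fin n, 1 ≤ (a : ℕ) → (a : ℕ) ≤ n - 2 → ∀ k : Fin n,
      D (e n a) k =
        if (a : ℕ) ≤ (k : ℕ) ∧ (k : ℕ) ≤ n - 2 then
          (((a : ℕ) + 1 : ℕ) : ℂ) * extα n α ((k : ℕ) - (a : ℕ))
        else 0 := by
    intro a ha1 ha2 k
    rw [h1 a k ha1 ha2]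
    split_ifs with h
    · rw [extα_eq n α _ (by omega)]
    · rfl
  have hvalU : ∀ a : Fin n, (a : ℕ) ≤ n - 2 → ∀ k : Fin n, (k : ℕ) + 2 ≤ n →
      D (e n a) k =
        if (a : ℕ) ≤ (k : ℕ) ∧ (k : ℕ) ≤ n - 2 then
          (((a : ℕ) + 1 : ℕ) : ℂ) * extα n α ((k : ℕ) - (a : ℕ))
        else 0 := by
    intro a ha k hk
    by_cases h0a : (a : ℕ) = 0
    · have ha' : a = ⟨0, by omega⟩ := Fin.ext (by simp only [Fin.val_mk]; omega)
      have hk' := k.isLt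
      rw [ha', h0, if_pos (by simp only [Fin.val_mk]; omega)]
      rw [extα_eq n α _ (by omega)]
      simp only [Fin.val_mk, Nat.sub_zero, Fin.eta]
      norm_num
    · exact hval1 a (by omega) ha k
  have hlast : ∀ j : Fin n, (j : ℕ) + 3 ≤ n → D (e n ⟨n - 1, (by omega : n - 1 + 1 ≤ n)⟩) j = 0 := by
    intro j hj
    rw [h2]
    simp only [Pi.add_apply, Pi.smul_apply, e, Pi.single_apply, smul_eq_mul]
    rw [if_neg (by intro hh; rw [hh] at hj; simp only [Fin.val_mk] at hj; omega),
        if_neg (by intro hh; rw [hh] at hj; simp only [Fin.val_mk] at hj; omega)]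
    ring
  intro a b k
  unfold Eqn
  have hk := k.isLt
  by_cases ha : (a : ℕ) = n - 1
  · have ha' : a = ⟨n - 1, by omega⟩ := Fin.ext (by simp only [Fin.val_mk]; omega)
    rw [dif_neg (by omega), ha']
    simp only [Fin.val_mk]
    split_ifs with p q q <;> try omega
    · rw [hlast _ (by simp only [Fin.val_mk]; omega)]
      norm_num
    · norm_num
  by_cases hb : (b : ℕ) = n - 1
  · have hb' : b = ⟨n - 1, by omega⟩ := Fin.ext (by simp only [Fin.val_mk]; omega)
    rw [dif_neg (by omega), hb']
    simp only [Fin.val_mk]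
    split_ifs with p q q <;> try omega
    · rw [hlast _ (by simp only [Fin.val_mk]; omega)]
      norm_num
    · norm_num
  have ha2 : (a : ℕ) ≤ n - 2 := by omega
  have hb2 : (b : ℕ) ≤ n - 2 := by omega
  split_ifs with c1 c2 c3 c2 c3 c3 c3 <;>
    (try rw [hval1 ⟨(a:ℕ)+(b:ℕ)+1, by omega⟩ (by simp only [Fin.val_mk]; omega)
          (by simp only [Fin.val_mk]; omega) k]) <;>
    (try rw [hvalU a ha2 ⟨(k:ℕ)-(b:ℕ)-1, by omega⟩ (by simp only [Fin.val_mk]; omega)]) <;>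
    (try rw [hvalU b hb2 ⟨(k:ℕ)-(a:ℕ)-1, by omega⟩ (by simp only [Fin.val_mk]; omega)]) <;>
    (try simp only [Fin.val_mk]) <;>
    (try split_ifs) <;>
    first
      | omega
      | (rw [show (k:ℕ) - (b:ℕ) - 1 - (a:ℕ) = (k:ℕ) - ((a:ℕ)+(b:ℕ)+1) from by omega,
             show (k:ℕ) - (a:ℕ) - 1 - (b:ℕ) = (k:ℕ) - ((a:ℕ)+(b:ℕ)+1) from by omega]
         push_cast; ring)
      | (push_cast; ring)
      | norm_num
noncomputable def MatP (n : ℕ) (p : (Fin n → ℂ) × ℂ × ℂ) : Matrix (Fin n) (Fin n) ℂ :=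
  fun k a =>
    if (a : ℕ) = 0 then p.1 k
    else if (a : ℕ) ≤ n - 2 then
      (if h : (a : ℕ) ≤ (k : ℕ) ∧ (k : ℕ) ≤ n - 2 then
        (((a : ℕ) + 1 : ℕ) : ℂ) * p.1 ⟨(k : ℕ) - (a : ℕ), lt_of_le_of_lt (Nat.sub_le _ _) k.isLt⟩
      else 0)
    else if (k : ℕ) = n - 2 then p.2.1 else if (k : ℕ) = n - 1 then p.2.2 else 0

noncomputable def MatL (n : ℕ) : ((Fin n → ℂ) × ℂ × ℂ) →ₗ[ℂ] Matrix (Fin n) (Fin n) ℂ :=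
    { toFun := MatP n
      map_add' := by
        intro p q
        funext k a
        show MatP n (p + q) k a = MatP n p k a + MatP n q k a
        unfold MatP
        simp only [Prod.fst_add, Prod.snd_add, Pi.add_apply, Matrix.add_apply]
        split_ifs <;> ring
      map_smul' := by
        intro c p
        funext k a
        show MatP n (c • p) k a = c * MatP n p k a
        unfold MatP
        simp only [Prod.smul_fst, Prod.smul_snd, Pi.smul_apply, Matrix.smul_apply,
          smul_eq_mul, RingHom.id_apply]
        split_ifs <;> ring }

noncomputable def Psi (n : ℕ) : ((Fin n → ℂ) × ℂ × ℂ) →ₗ[ℂ] ((Fin n → ℂ) →ₗ[ℂ] (Fin n → ℂ)) :=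
  (Matrix.toLin' : Matrix (Fin n) (Fin n) ℂ ≃ₗ[ℂ] _).toLinearMap.comp (MatL n)

lemma Psi_col (n : ℕ) (p : (Fin n → ℂ) × ℂ × ℂ) (a k : Fin n) :
    Psi n p (e n a) k = MatP n p k a := by
  have h : Psi n p (e n a) = (MatP n p).mulVec (Pi.single a 1) := by
    show Matrix.toLin' (MatP n p) (e n a) = _
    rw [Matrix.toLin'_apply]; rfl
  rw [h, Matrix.mulVec_single]
  simp

lemma eq_of_formulas (n : ℕ) (hn : 3 < n) (D D' : (Fin n → ℂ) →ₗ[ℂ] (Fin n → ℂ))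
    (α : Fin n → ℂ) (β1 β2 : ℂ)
    (hD0 : ∀ k : Fin n, D (e n ⟨0, (by omega : 0 + 1 ≤ n)⟩) k = α k)
    (hD1 : ∀ a k : Fin n, 1 ≤ (a : ℕ) → (a : ℕ) ≤ n - 2 →
            D (e n a) k =
              if h : (a : ℕ) ≤ (k : ℕ) ∧ (k : ℕ) ≤ n - 2 then
                (((a : ℕ) + 1 : ℕ) : ℂ) *
                  α ⟨(k : ℕ) - (a : ℕ), lt_of_le_of_lt (Nat.sub_le _ _) k.isLt⟩
              else 0)
    (hD2 : D (e n ⟨n - 1, (by omega : n - 1 + 1 ≤ n)⟩) = β1 • e n ⟨n - 2, (by omega : n - 2 + 1 ≤ n)⟩ + β2 • e n ⟨n - 1, (by omega : n - 1 + 1 ≤ n)⟩)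
    (hD0' : ∀ k : Fin n, D' (e n ⟨0, (by omega : 0 + 1 ≤ n)⟩) k = α k)
    (hD1' : ∀ a k : Fin n, 1 ≤ (a : ℕ) → (a : ℕ) ≤ n - 2 →
            D' (e n a) k =
              if h : (a : ℕ) ≤ (k : ℕ) ∧ (k : ℕ) ≤ n - 2 then
                (((a : ℕ) + 1 : ℕ) : ℂ) *
                  α ⟨(k : ℕ) - (a : ℕ), lt_of_le_of_lt (Nat.sub_le _ _) k.isLt⟩
              else 0)
    (hD2' : D' (e n ⟨n - 1, (by omega : n - 1 + 1 ≤ n)⟩) = β1 • e n ⟨n - 2, (by omega : n - 2 + 1 ≤ n)⟩ + β2 • e n ⟨n - 1, (by omega : n - 1 + 1 ≤ n)⟩) :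
    D = D' := by
  apply (Pi.basisFun ℂ (Fin n)).ext
  intro a
  rw [← e_eq_basis]
  by_cases ha0 : (a : ℕ) = 0
  · have haa : a = ⟨0, by omega⟩ := Fin.ext (by simp only [Fin.val_mk]; omega)
    rw [haa]
    funext k
    rw [hD0, hD0']
  by_cases han : (a : ℕ) = n - 1
  · have haa : a = ⟨n - 1, by omega⟩ := Fin.ext (by simp only [Fin.val_mk]; omega)
    rw [haa, hD2, hD2']
  · funext k
    rw [hD1 a k (by omega) (by omega), hD1' a k (by omega) (by omega)]
theorem stmt15 (n : ℕ) (hn : 3 < n) :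
    (∀ D : (Fin n → ℂ) →ₗ[ℂ] (Fin n → ℂ),
      IsDer (mul11 n) D ↔
        ∃ (α : Fin n → ℂ) (β1 β2 : ℂ),
          (∀ k : Fin n, D (e n ⟨0, by omega⟩) k = α k) ∧
          (∀ a k : Fin n, 1 ≤ (a : ℕ) → (a : ℕ) ≤ n - 2 →
            D (e n a) k =
              if h : (a : ℕ) ≤ (k : ℕ) ∧ (k : ℕ) ≤ n - 2 then
                (((a : ℕ) + 1 : ℕ) : ℂ) *
                  α ⟨(k : ℕ) - (a : ℕ), lt_of_le_of_lt (Nat.sub_le _ _) k.isLt⟩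
              else 0) ∧
          D (e n ⟨n - 1, by omega⟩) =
            β1 • e n ⟨n - 2, by omega⟩ + β2 • e n ⟨n - 1, by omega⟩) ∧
    Module.finrank ℂ
      (derSubmodule n (mul11 n) (mul11_add_left n) (mul11_add_right n)
        (mul11_smul_left n) (mul11_smul_right n)) = n + 2 := by
  have main : ∀ D : (Fin n → ℂ) →ₗ[ℂ] (Fin n → ℂ),
      IsDer (mul11 n) D ↔
        ∃ (α : Fin n → ℂ) (β1 β2 : ℂ),
          (∀ k : Fin n, D (e n ⟨0, by omega⟩) k = α k) ∧
          (∀ a k : Fin n, 1 ≤ (a : ℕ) → (a : ℕ) ≤ n - 2 →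
            D (e n a) k =
              if h : (a : ℕ) ≤ (k : ℕ) ∧ (k : ℕ) ≤ n - 2 then
                (((a : ℕ) + 1 : ℕ) : ℂ) *
                  α ⟨(k : ℕ) - (a : ℕ), lt_of_le_of_lt (Nat.sub_le _ _) k.isLt⟩
              else 0) ∧
          D (e n ⟨n - 1, by omega⟩) =
            β1 • e n ⟨n - 2, by omega⟩ + β2 • e n ⟨n - 1, by omega⟩ := by
    intro D
    rw [isDer_iff_basis, basis_iff_eqn n hn]
    constructor
    · intro hE
      refine ⟨fun k => D (e n ⟨0, by omega⟩) k,
        D (e n ⟨n - 1, by omega⟩) ⟨n - 2, by omega⟩,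
        D (e n ⟨n - 1, by omega⟩) ⟨n - 1, by omega⟩,
        fun k => rfl, ?_, ?_⟩
      · intro a k ha1 ha2
        have h := mid_formula n hn D hE (a : ℕ) ha1 ha2 k
        simp only [Fin.eta] at h
        exact h
      · funext j
        have hjlt := j.isLt
        by_cases hj2 : (j : ℕ) = n - 2
        · have hjj : j = ⟨n - 2, by omega⟩ := Fin.ext (by simp only [Fin.val_mk]; omega)
          rw [hjj]
          simp only [Pi.add_apply, Pi.smul_apply, e, Pi.single_apply, smul_eq_mul,
            Fin.ext_iff, Fin.val_mk]
          split_ifs <;> first | ring1 | (exfalso; omega)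
        by_cases hj1 : (j : ℕ) = n - 1
        · have hjj : j = ⟨n - 1, by omega⟩ := Fin.ext (by simp only [Fin.val_mk]; omega)
          rw [hjj]
          simp only [Pi.add_apply, Pi.smul_apply, e, Pi.single_apply, smul_eq_mul,
            Fin.ext_iff, Fin.val_mk]
          split_ifs <;> first | ring1 | (exfalso; omega)
        · rw [last_zero n hn D hE j (by omega)]
          simp only [Pi.add_apply, Pi.smul_apply, e, Pi.single_apply, smul_eq_mul]
          simp only [Fin.ext_iff, Fin.val_mk]
          split_ifs <;> first | ring1 | (exfalso; omega)
    · rintro ⟨α, β1, β2, h0, h1, h2⟩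
      exact backward n hn D α β1 β2 h0 h1 h2
  refine ⟨main, ?_⟩
  have hcol0 : ∀ (p : (Fin n → ℂ) × ℂ × ℂ) (k : Fin n),
      Psi n p (e n ⟨0, by omega⟩) k = p.1 k := by
    intro p k
    rw [Psi_col]
    unfold MatP
    rw [if_pos rfl]
  have hcol1 : ∀ (p : (Fin n → ℂ) × ℂ × ℂ) (a k : Fin n), 1 ≤ (a : ℕ) → (a : ℕ) ≤ n - 2 →
      Psi n p (e n a) k =
        if h : (a : ℕ) ≤ (k : ℕ) ∧ (k : ℕ) ≤ n - 2 then
          (((a : ℕ) + 1 : ℕ) : ℂ) *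
            p.1 ⟨(k : ℕ) - (a : ℕ), lt_of_le_of_lt (Nat.sub_le _ _) k.isLt⟩
        else 0 := by
    intro p a k ha1 ha2
    rw [Psi_col]
    unfold MatP
    rw [if_neg (by omega), if_pos ha2]
  have hcol2 : ∀ p : (Fin n → ℂ) × ℂ × ℂ,
      Psi n p (e n ⟨n - 1, by omega⟩) =
        p.2.1 • e n ⟨n - 2, by omega⟩ + p.2.2 • e n ⟨n - 1, by omega⟩ := by
    intro p
    funext j
    rw [Psi_col]
    unfold MatP
    simp only [Fin.val_mk]
    rw [if_neg (by omega), if_neg (by omega)]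
    have hjlt := j.isLt
    simp only [Pi.add_apply, Pi.smul_apply, e, Pi.single_apply, smul_eq_mul, Fin.ext_iff,
      Fin.val_mk]
    split_ifs <;> first | ring1 | (exfalso; omega)
  have hv1 : ∀ p : (Fin n → ℂ) × ℂ × ℂ,
      Psi n p (e n ⟨n - 1, by omega⟩) ⟨n - 2, by omega⟩ = p.2.1 := by
    intro p
    rw [Psi_col]
    unfold MatP
    simp only [Fin.val_mk]
    rw [if_neg (by omega), if_neg (by omega)]
    simp
  have hv2 : ∀ p : (Fin n → ℂ) × ℂ × ℂ,
      Psi n p (e n ⟨n - 1, by omega⟩) ⟨n - 1, by omega⟩ = p.2.2 := by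
    intro p
    rw [Psi_col]
    unfold MatP
    simp only [Fin.val_mk]
    rw [if_neg (by omega), if_neg (by omega), if_neg (by omega)]
    simp
  set S := derSubmodule n (mul11 n) (mul11_add_left n) (mul11_add_right n)
    (mul11_smul_left n) (mul11_smul_right n) with hS
  have hmem : ∀ p, Psi n p ∈ S := by
    intro p
    show IsDer (mul11 n) (Psi n p)
    rw [isDer_iff_basis, basis_iff_eqn n hn]
    exact backward n hn _ p.1 p.2.1 p.2.2 (hcol0 p) (fun a k => hcol1 p a k) (hcol2 p)
  let Φ : ((Fin n → ℂ) × ℂ × ℂ) →ₗ[ℂ] S := (Psi n).codRestrict S hmem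
  have hbij : Function.Bijective Φ := by
    constructor
    · intro p q hpq
      have h' : Psi n p = Psi n q := congrArg Subtype.val hpq
      have h1' : p.1 = q.1 := by
        funext k
        have hthis := congrFun (DFunLike.congr_fun h' (e n ⟨0, by omega⟩)) k
        rwa [hcol0, hcol0] at hthis
      have h2a : p.2.1 = q.2.1 := by
        have hthis := congrFun (DFunLike.congr_fun h' (e n ⟨n - 1, by omega⟩)) ⟨n - 2, by omega⟩
        rwa [hv1, hv1] at hthis
      have h2b : p.2.2 = q.2.2 := by
        have hthis := congrFun (DFunLike.congr_fun h' (e n ⟨n - 1, by omega⟩)) ⟨n - 1, by omega⟩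
        rwa [hv2, hv2] at hthis
      exact Prod.ext h1' (Prod.ext h2a h2b)
    · rintro ⟨D, hD⟩
      obtain ⟨α, β1, β2, h0, h1, h2⟩ := (main D).mp hD
      refine ⟨(α, β1, β2), ?_⟩
      apply Subtype.ext
      show Psi n (α, β1, β2) = D
      exact eq_of_formulas n hn _ D α β1 β2 (hcol0 _) (fun a k => hcol1 _ a k) (hcol2 _)
        h0 h1 h2
  have hequiv := LinearEquiv.ofBijective Φ hbij
  rw [← hequiv.finrank_eq]
  simp
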